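/- Let π̄ be an F_q-subplane of PG(2,q³) (a subplane projectively equivalent to PG(2,q)). In the Bose representation in PG(8,q), the q²+q+1 planes {[X] : X ∈ π}, where [X] = ⟨X, X^q, X^{q²}⟩ ∩ PG(8,q) for X in the copy π of π̄ in the transversal plane Γ, form one system of maximal subspaces of a Segre variety S_{2;2} of PG(8,q). -/

import Mathlib

/-- Let π̄ be an F_q-subplane of PG(2,q³) (the image under a
homography `g` of the standard subplane PG(2,q)).  In the Bose representation
(K³ identified with F_q⁹ via the basis {1,τ,τ²}), the q²+q+1 Bose planes
{Q : X_Q ∈ ⟨X⟩_K} of the points X of π form one system of maximal subspaces of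
a Segre variety S_{2;2} of PG(8,q), i.e. they are the image, under a linear
change of coordinates h of F_q⁹ (= 3×3 matrices), of the standard system of
planes {u ⊗ c : u ∈ F_q³} (c ∈ F_q³ \ {0}) of rank-one matrices. -/
theorem stmt15 {F K : Type*} [Field F] [Fintype F] [Field K] [Algebra F K] (τ : K)
    (b : Module.Basis (Fin 3) F K) (hb : ∀ j : Fin 3, b j = τ ^ (j : ℕ))
    (g : (Fin 3 → K) ≃ₗ[K] (Fin 3 → K))
    (emb : (Fin 3 → F) → Fin 3 → K) (hemb : ∀ w i, emb w i = algebraMap F K (w i))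
    (bose : (Fin 3 → K) → Set (Fin 3 → Fin 3 → F))
    (hbose : ∀ Y, bose Y = {Q : Fin 3 → Fin 3 → F | ∃ ρ : K,
      (fun i => ∑ j : Fin 3, algebraMap F K (Q i j) * τ ^ (j : ℕ)) = ρ • Y}) :
    ∃ h : (Fin 3 → Fin 3 → F) ≃ₗ[F] (Fin 3 → Fin 3 → F),
      {S | ∃ w : Fin 3 → F, w ≠ 0 ∧ S = bose (g (emb w))}
        = {S | ∃ c : Fin 3 → F, c ≠ 0 ∧
            S = (h : (Fin 3 → Fin 3 → F) → Fin 3 → Fin 3 → F) ''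
              {M | ∃ u : Fin 3 → F, M = fun i j => u i * c j}} := by
  classical
  let tr : (Fin 3 → Fin 3 → F) ≃ₗ[F] (Fin 3 → Fin 3 → F) :=
    { toFun := fun M i j => M j i
      invFun := fun M i j => M j i
      map_add' := fun _ _ => rfl
      map_smul' := fun _ _ => rfl
      left_inv := fun _ => rfl
      right_inv := fun _ => rfl }
  let φ : (Fin 3 → Fin 3 → F) ≃ₗ[F] (Fin 3 → K) :=
    LinearEquiv.piCongrRight fun _ => b.equivFun.symm
  refine ⟨tr.trans (φ.trans ((g.restrictScalars F).trans φ.symm)), ?_⟩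
  set h := tr.trans (φ.trans ((g.restrictScalars F).trans φ.symm)) with hh
  have hφ : ∀ Q : Fin 3 → Fin 3 → F,
      (fun i => ∑ j : Fin 3, algebraMap F K (Q i j) * τ ^ (j : ℕ)) = φ Q := by
    intro Q; funext i
    simp [φ, Module.Basis.equivFun_symm_apply, hb, Algebra.smul_def]
  have hkey : ∀ u c : Fin 3 → F,
      h (fun i j => u i * c j) = φ.symm ((b.equivFun.symm u) • g (emb c)) := by
    intro u c
    have h1 : φ (tr fun i j => u i * c j) = (b.equivFun.symm u) • emb c := by
      funext j
      have e1 : ∀ i, (u i * c j) • b i = c j • (u i • b i) := fun i => by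
        rw [mul_comm, mul_smul]
      simp only [φ, tr, LinearEquiv.piCongrRight_apply, LinearEquiv.coe_mk, LinearMap.coe_mk, AddHom.coe_mk,
        Module.Basis.equivFun_symm_apply, Pi.smul_apply, hemb, smul_eq_mul]
      rw [Finset.sum_congr rfl fun i _ => e1 i, ← Finset.smul_sum,
        Algebra.smul_def, mul_comm]
    have : h (fun i j => u i * c j)
        = φ.symm (g (φ (tr fun i j => u i * c j))) := rfl
    rw [this, h1, map_smul]
  have main : ∀ w : Fin 3 → F,
      bose (g (emb w)) = h '' {M | ∃ u : Fin 3 → F, M = fun i j => u i * w j} := by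
    intro w
    ext Q
    rw [hbose]
    simp only [Set.mem_setOf_eq, Set.mem_image]
    constructor
    · rintro ⟨ρ, hρ⟩
      rw [hφ Q] at hρ
      refine ⟨fun i j => b.equivFun ρ i * w j, ⟨_, rfl⟩, ?_⟩
      rw [hkey, b.equivFun.symm_apply_apply, ← hρ, LinearEquiv.symm_apply_apply]
    · rintro ⟨M, ⟨u, rfl⟩, rfl⟩
      refine ⟨b.equivFun.symm u, ?_⟩
      rw [hφ, hkey, LinearEquiv.apply_symm_apply]
  ext S
  simp only [Set.mem_setOf_eq]
  constructor
  · rintro ⟨w, hw, rfl⟩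
    exact ⟨w, hw, main w⟩
  · rintro ⟨c, hc, rfl⟩
    exact ⟨c, hc, (main c).symm⟩
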